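/- Let (R,m,k) be a commutative Noetherian local ring which is not a field. If k is a direct summand of Ω⁴(M) for every non-free finitely generated R-module M, then soc(R) ≠ 0 (equivalently, depth(R) = 0) and k is a direct summand of Ω²(k) (equivalently, R is a Burch ring of depth zero). -/

import Mathlib

open IsLocalRing

universe u

/-- `k = R/m` is a direct summand of the `R`-module `M`, i.e. `M ≅ k ⊕ N` for some `N`. -/
def ResidueFieldIsSummand (R : Type u) [CommRing R] [IsLocalRing R]
    (M : Type u) [AddCommGroup M] [Module R M] : Prop :=
  ∃ p q : Submodule R M, IsCompl p q ∧ Nonempty (p ≃ₗ[R] ResidueField R)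

/-- `π : F → M` is a minimal free cover: `F` is finitely generated free, `π` is
surjective, and `ker π ⊆ m·F`. -/
def IsMinimalFreeCover (R : Type u) [CommRing R] [IsLocalRing R]
    {F M : Type u} [AddCommGroup F] [Module R F] [AddCommGroup M] [Module R M]
    (π : F →ₗ[R] M) : Prop :=
  Module.Free R F ∧ Module.Finite R F ∧ Function.Surjective π ∧
    LinearMap.ker π ≤ (maximalIdeal R) • (⊤ : Submodule R F)

/-- `IsSyzygy R n M N` means that `N` is (isomorphic to) an `n`-th syzygy `Ωⁿ(M)` of `M`,
computed from minimal free covers. -/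
def IsSyzygy (R : Type u) [CommRing R] [IsLocalRing R] :
    ℕ → ModuleCat.{u} R → ModuleCat.{u} R → Prop
  | 0, M, N => Nonempty (N ≃ₗ[R] M)
  | n + 1, M, N => ∃ (F : ModuleCat.{u} R) (π : F →ₗ[R] M),
      IsMinimalFreeCover R π ∧ IsSyzygy R n (ModuleCat.of R (LinearMap.ker π)) N

section Helpers

set_option linter.unusedSectionVars false
variable {R : Type u} [CommRing R] [IsLocalRing R]

lemma isSyzygy_congr : ∀ {n : ℕ} {M M' N N' : ModuleCat.{u} R},
    (M ≃ₗ[R] M') → (N ≃ₗ[R] N') → IsSyzygy R n M N → IsSyzygy R n M' N'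
  | 0, M, M', N, N', e, f, ⟨g⟩ => ⟨f.symm.trans (g.trans e)⟩
  | n + 1, M, M', N, N', e, f, ⟨F, π, hc, hs⟩ => by
    refine ⟨F, e.toLinearMap ∘ₗ π, ⟨hc.1, hc.2.1, ?_, ?_⟩, ?_⟩
    · exact e.surjective.comp hc.2.2.1
    · have : LinearMap.ker (e.toLinearMap ∘ₗ π) = LinearMap.ker π := by
        ext x; simp
      exact this ▸ hc.2.2.2
    · have hk : LinearMap.ker (e.toLinearMap ∘ₗ π) = LinearMap.ker π := by
        ext x; simp
      exact isSyzygy_congr (LinearEquiv.ofEq _ _ hk.symm) f hs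

noncomputable def subsingletonEquiv {A B : Type u} [AddCommGroup A] [Module R A] [AddCommGroup B]
    [Module R B] [Subsingleton A] [Subsingleton B] : A ≃ₗ[R] B where
  toFun := fun _ => 0
  invFun := fun _ => 0
  left_inv := fun x => Subsingleton.elim _ _
  right_inv := fun x => Subsingleton.elim _ _
  map_add' := fun _ _ => (add_zero 0).symm
  map_smul' := fun r x => (smul_zero r).symm

lemma isSyzygy_punit : ∀ (n : ℕ) (M : ModuleCat.{u} R), Subsingleton M →
    IsSyzygy R n M (ModuleCat.of R PUnit)
  | 0, M, hM => by
    haveI := hM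
    exact ⟨subsingletonEquiv⟩
  | n + 1, M, hM => by
    haveI := hM
    haveI : Module.Free R PUnit.{u+1} := Module.Free.of_subsingleton R PUnit.{u+1}
    refine ⟨ModuleCat.of R PUnit, 0, ⟨inferInstance, inferInstance, ?_, ?_⟩, ?_⟩
    · exact fun y => ⟨0, Subsingleton.elim _ _⟩
    · intro x _
      have : x = 0 := Subsingleton.elim _ _
      simp [this]
    · haveI : Subsingleton (LinearMap.ker (0 : PUnit.{u+1} →ₗ[R] ↥M)) :=
        ⟨fun a b => Subtype.ext (Subsingleton.elim _ _)⟩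
      exact isSyzygy_punit n _ (inferInstanceAs
        (Subsingleton (LinearMap.ker (0 : PUnit.{u+1} →ₗ[R] ↥M))))

noncomputable def kerPiEquiv {d : ℕ} {F A : Type u} [AddCommGroup F] [Module R F]
    [AddCommGroup A] [Module R A] (π : F →ₗ[R] A) :
    (LinearMap.ker (π.compLeft (Fin d))) ≃ₗ[R] (Fin d → LinearMap.ker π) where
  toFun w := fun i => ⟨w.1 i, by
    have := LinearMap.mem_ker.mp w.2
    exact LinearMap.mem_ker.mpr (congrFun this i)⟩
  invFun v := ⟨fun i => (v i).1, by
    refine LinearMap.mem_ker.mpr (funext fun i => ?_)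
    exact (v i).2⟩
  left_inv w := rfl
  right_inv v := rfl
  map_add' _ _ := rfl
  map_smul' _ _ := rfl

lemma isSyzygy_pi : ∀ {n : ℕ} (d : ℕ) {A N : ModuleCat.{u} R}, IsSyzygy R n A N →
    IsSyzygy R n (ModuleCat.of R (Fin d → A)) (ModuleCat.of R (Fin d → N))
  | 0, d, A, N, ⟨e⟩ => ⟨LinearEquiv.piCongrRight fun _ => e⟩
  | n + 1, d, A, N, ⟨F, π, ⟨hfree, hfin, hsurj, hker⟩, hs⟩ => by
    haveI := hfree; haveI := hfin
    refine ⟨ModuleCat.of R (Fin d → F), π.compLeft (Fin d),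
      ⟨inferInstanceAs (Module.Free R (Fin d → F)),
        inferInstanceAs (Module.Finite R (Fin d → F)), ?_, ?_⟩, ?_⟩
    · intro v
      choose w hw using fun i => hsurj (v i)
      exact ⟨w, funext hw⟩
    · intro v hv
      have hv' : ∀ i, v i ∈ LinearMap.ker π := fun i =>
        LinearMap.mem_ker.mpr (congrFun (LinearMap.mem_ker.mp hv) i)
      rw [show v = ∑ i, Pi.single i (v i) from (Finset.univ_sum_single v).symm]
      apply Submodule.sum_mem
      intro i _
      have h1 : Pi.single i (v i) ∈ Submodule.map
          (LinearMap.single R (fun _ : Fin d => F) i) ((maximalIdeal R) • ⊤) :=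
        ⟨v i, hker (hv' i), rfl⟩
      rw [Submodule.map_smul''] at h1
      exact smul_mono_right _ (le_top : Submodule.map (LinearMap.single R (fun _ : Fin d => F) i) ⊤ ≤ ⊤) h1
    · exact isSyzygy_congr (kerPiEquiv π).symm (LinearEquiv.refl R _) (isSyzygy_pi d hs)

lemma summand_of_pi {d : ℕ} {N : Type u} [AddCommGroup N] [Module R N]
    (h : ResidueFieldIsSummand R (Fin d → N)) : ResidueFieldIsSummand R N := by
  classical
  obtain ⟨p, q, hc, ⟨e⟩⟩ := h
  let β : (Fin d → N) →ₗ[R] ResidueField R := e.toLinearMap ∘ₗ p.projectionOnto q hc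
  let α : ResidueField R →ₗ[R] (Fin d → N) := p.subtype ∘ₗ e.symm.toLinearMap
  have hβα : ∀ c, β (α c) = c := by
    intro c
    simp [α, β, Submodule.projectionOnto_apply_left]
  have hex : ∃ i : Fin d, β (Pi.single i (α 1 i)) ≠ 0 := by
    by_contra hno
    push_neg at hno
    have h1 : ∑ i : Fin d, β (Pi.single i (α 1 i)) = 1 := by
      rw [← map_sum, Finset.univ_sum_single (α 1)]
      exact hβα 1
    rw [Finset.sum_eq_zero (fun i _ => hno i)] at h1
    exact zero_ne_one h1
  obtain ⟨i, hu0⟩ := hex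
  let A : ResidueField R →ₗ[R] N := (LinearMap.proj i) ∘ₗ α
  let B0 : N →ₗ[R] ResidueField R := β ∘ₗ LinearMap.single R (fun _ : Fin d => N) i
  set u : ResidueField R := β (Pi.single i (α 1 i)) with hu
  have hmul : ∀ y, B0 (A y) = y * u := by
    intro y
    obtain ⟨r, rfl⟩ := Ideal.Quotient.mk_surjective y
    have h1 : (Ideal.Quotient.mk (maximalIdeal R) r) = r • (1 : ResidueField R) := by
      rw [Algebra.smul_def, mul_one]; rfl
    rw [h1, map_smul, map_smul]
    show r • u = (r • (1 : ResidueField R)) * u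
    rw [Algebra.smul_def, Algebra.smul_def, mul_one]
  let B : N →ₗ[R] ResidueField R := u⁻¹ • B0
  have hBA : ∀ y, B (A y) = y := by
    intro y
    show u⁻¹ • B0 (A y) = y
    rw [hmul, smul_eq_mul, mul_comm y u, ← mul_assoc, inv_mul_cancel₀ hu0, one_mul]
  have hinj : Function.Injective A := Function.LeftInverse.injective hBA
  let f : N →ₗ[R] (LinearMap.range A) :=
    LinearMap.codRestrict (LinearMap.range A) (A ∘ₗ B) (fun x => ⟨B x, rfl⟩)
  have hf : ∀ x : LinearMap.range A, f x = x := by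
    rintro ⟨x, y, rfl⟩
    apply Subtype.ext
    show A (B (A y)) = A y
    rw [hBA]
  exact ⟨LinearMap.range A, LinearMap.ker f, LinearMap.isCompl_of_proj hf,
    ⟨(LinearEquiv.ofInjective A hinj).symm⟩⟩


end Helpers

theorem stmt2 (R : Type u) [CommRing R] [IsNoetherianRing R] [IsLocalRing R]
    (hR : ¬ IsField R)
    (h : ∀ M : ModuleCat.{u} R, Module.Finite R M → ¬ Module.Free R M →
      ∀ N : ModuleCat.{u} R, IsSyzygy R 4 M N → ResidueFieldIsSummand R N) :
    Submodule.torsionBySet R R (maximalIdeal R : Set R) ≠ ⊥ ∧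
      ∀ N : ModuleCat.{u} R, IsSyzygy R 2 (ModuleCat.of R (ResidueField R)) N →
        ResidueFieldIsSummand R N := by
  classical
  set S : Ideal R := Submodule.torsionBySet R R (maximalIdeal R : Set R) with hSdef
  have hmbot : maximalIdeal R ≠ ⊥ := fun hb => hR (isField_iff_maximalIdeal_eq.mpr hb)
  obtain ⟨g, t, ht⟩ := Submodule.fg_iff_exists_fin_generating_family.mp
    (IsNoetherian.noetherian (maximalIdeal R))
  have hx0 : t ≠ 0 := by
    intro h0
    apply hmbot
    rw [← ht, eq_bot_iff, Submodule.span_le]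
    rintro - ⟨i, rfl⟩
    simp [congrFun h0 i]
  have hti : ∀ i, t i ∈ maximalIdeal R := fun i => ht ▸ Submodule.subset_span ⟨i, rfl⟩
  set X : Submodule R (Fin g → R) := Submodule.span R {t} with hXdef
  have hxX : t ∈ X := Submodule.mem_span_singleton_self t
  have hXle : X ≤ (maximalIdeal R) • (⊤ : Submodule R (Fin g → R)) := by
    rw [Submodule.span_le, Set.singleton_subset_iff]
    rw [show t = ∑ i, Pi.single i (t i) from (Finset.univ_sum_single t).symm]
    refine Submodule.sum_mem _ fun i _ => ?_
    have h1 : Pi.single i (t i) = (t i : R) • (Pi.single i (1 : R) : Fin g → R) := by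
      rw [← Pi.single_smul, smul_eq_mul, mul_one]
    rw [h1]
    exact Submodule.smul_mem_smul (hti i) Submodule.mem_top
  have cover0 : IsMinimalFreeCover R X.mkQ :=
    ⟨inferInstance, inferInstance, Submodule.mkQ_surjective X, by
      rw [Submodule.ker_mkQ]; exact hXle⟩
  have finM : Module.Finite R ((Fin g → R) ⧸ X) := Module.Finite.quotient R X
  have nonfreeM : ¬ Module.Free R ((Fin g → R) ⧸ X) := by
    intro hfree
    haveI := hfree
    obtain ⟨σ, hσ⟩ := Module.projective_lifting_property X.mkQ LinearMap.id
      (Submodule.mkQ_surjective X)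
    set Pm : (Fin g → R) →ₗ[R] (Fin g → R) := LinearMap.id - σ ∘ₗ X.mkQ with hPmdef
    have hPmem : ∀ w, Pm w ∈ X := by
      intro w
      have h3 : X.mkQ (σ (X.mkQ w)) = X.mkQ w := LinearMap.congr_fun hσ (X.mkQ w)
      have h2 : X.mkQ (Pm w) = 0 := by
        rw [show Pm w = w - σ (X.mkQ w) from rfl, map_sub, h3, sub_self]
      rw [← Submodule.ker_mkQ X]
      exact LinearMap.mem_ker.mpr h2
    have hXsmul : X ≤ (maximalIdeal R) • X := by
      intro v hv
      have hveq : Pm v = v := by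
        have h4 : X.mkQ v = 0 := by
          rw [← LinearMap.mem_ker, Submodule.ker_mkQ]; exact hv
        rw [show Pm v = v - σ (X.mkQ v) from rfl, h4, map_zero, sub_zero]
      have h1 : v ∈ Submodule.map Pm ((maximalIdeal R) • ⊤) := ⟨v, hXle hv, hveq⟩
      rw [Submodule.map_smul''] at h1
      have h5 : Submodule.map Pm ⊤ ≤ X := by
        rintro - ⟨w, -, rfl⟩
        exact hPmem w
      exact smul_mono_right _ h5 h1
    have hXbot : X = ⊥ := Submodule.eq_bot_of_le_smul_of_le_jacobson_bot
      (maximalIdeal R) X (IsNoetherian.noetherian X) hXsmul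
      (IsLocalRing.maximalIdeal_le_jacobson ⊥)
    rw [hXbot] at hxX
    exact hx0 (by simpa using hxX)
  set xel : X := ⟨t, hxX⟩ with hxeldef
  set π₁ : R →ₗ[R] X := LinearMap.toSpanSingleton R X xel with hπ₁def
  have hπ₁surj : Function.Surjective π₁ := by
    rintro ⟨y, hy⟩
    obtain ⟨r, hr⟩ := Submodule.mem_span_singleton.mp hy
    exact ⟨r, Subtype.ext hr⟩
  have hker1 : LinearMap.ker π₁ = S := by
    ext r
    simp only [LinearMap.mem_ker, hπ₁def, LinearMap.toSpanSingleton_apply]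
    rw [hSdef]
    constructor
    · intro hr
      have hr' : r • t = 0 := by simpa using congrArg Subtype.val hr
      rw [Submodule.mem_torsionBySet_iff]
      rintro ⟨a, ha⟩
      show a • r = 0
      have ham : a ∈ Submodule.span R (Set.range t) := by rw [ht]; exact ha
      clear ha
      induction ham using Submodule.span_induction with
      | mem z hz =>
          obtain ⟨i, rfl⟩ := hz
          have := congrFun hr' i
          simpa [mul_comm] using this
      | zero => simp
      | add y z hy' hz' hy hz =>
          rw [smul_eq_mul, add_mul]
          rw [smul_eq_mul] at hy hz
          rw [hy, hz, add_zero]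
      | smul c y hy' hy =>
          rw [smul_eq_mul, smul_eq_mul, mul_assoc]
          rw [smul_eq_mul] at hy
          rw [hy, mul_zero]
    · intro hr
      rw [Submodule.mem_torsionBySet_iff] at hr
      apply Subtype.ext
      show r • t = 0
      funext i
      have := hr ⟨t i, hti i⟩
      simpa [mul_comm] using this
  have hSle : S ≤ maximalIdeal R := by
    apply IsLocalRing.le_maximalIdeal
    intro hST
    apply hmbot
    rw [eq_bot_iff]
    intro a ha
    have h1 : (1 : R) ∈ S := hST ▸ Submodule.mem_top
    rw [hSdef, Submodule.mem_torsionBySet_iff] at h1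
    have := h1 ⟨a, ha⟩
    simpa using this
  have hmtop : (maximalIdeal R) • (⊤ : Submodule R R) = maximalIdeal R := by
    apply le_antisymm
    · rw [Submodule.smul_le]
      intro a ha x _
      exact Ideal.mul_mem_right x _ ha
    · intro a ha
      simpa using Submodule.smul_mem_smul ha (Submodule.mem_top (x := (1:R)))
  have cover1 : IsMinimalFreeCover R π₁ :=
    ⟨inferInstance, inferInstance, hπ₁surj, by rw [hker1, hmtop]; exact hSle⟩
  have buildSyz : ∀ T : ModuleCat.{u} R,
      IsSyzygy R 2 (ModuleCat.of R (LinearMap.ker π₁)) T →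
      IsSyzygy R 4 (ModuleCat.of R ((Fin g → R) ⧸ X)) T := by
    intro T hT
    have h4 : IsSyzygy R 3 (ModuleCat.of R X) T := ⟨ModuleCat.of R R, π₁, cover1, hT⟩
    have h5 : IsSyzygy R 3 (ModuleCat.of R (LinearMap.ker X.mkQ)) T :=
      isSyzygy_congr (LinearEquiv.ofEq _ _ (Submodule.ker_mkQ X).symm)
        (LinearEquiv.refl R _) h4
    exact ⟨ModuleCat.of R (Fin g → R), X.mkQ, cover0, h5⟩
  constructor
  · intro hSbot
    have hkb : LinearMap.ker π₁ = ⊥ := hker1.trans hSbot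
    haveI hss : Subsingleton (LinearMap.ker π₁) := by
      rw [hkb]; infer_instance
    have hT : IsSyzygy R 4 (ModuleCat.of R ((Fin g → R) ⧸ X)) (ModuleCat.of R PUnit) :=
      buildSyz _ (isSyzygy_punit 2 _ hss)
    obtain ⟨p, q, hc, ⟨e⟩⟩ := h _ finM nonfreeM _ hT
    haveI : Subsingleton p := ⟨fun a b => Subtype.ext (Subsingleton.elim _ _)⟩
    haveI : Subsingleton (ResidueField R) := e.symm.toEquiv.subsingleton
    exact false_of_nontrivial_of_subsingleton (ResidueField R)
  · intro N hN
    letI i1 : Module (ResidueField R) S :=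
      (inferInstance : Module (R ⧸ maximalIdeal R)
        (Submodule.torsionBySet R R (maximalIdeal R : Set R)))
    haveI i2 : IsScalarTower R (ResidueField R) S := by
      constructor
      intro r c x
      obtain ⟨a, rfl⟩ := Ideal.Quotient.mk_surjective c
      have h1 : r • (Ideal.Quotient.mk (maximalIdeal R) a : ResidueField R) = Ideal.Quotient.mk _ (r * a) := by
        rw [Algebra.smul_def]; rfl
      change (Ideal.Quotient.mk (maximalIdeal R) (r * a) : ResidueField R) • x = _
      exact mul_smul r a x
    haveI i3 : Module.Finite R S := Module.Finite.iff_fg.mpr (IsNoetherian.noetherian S)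
    haveI i4 : Module.Finite (ResidueField R) S :=
      Module.Finite.of_restrictScalars_finite R _ _
    set d := Module.finrank (ResidueField R) S with hddef
    set b : Module.Basis (Fin d) (ResidueField R) S := Module.finBasis _ _ with hbdef
    have e0 : S ≃ₗ[R] (Fin d → ResidueField R) := b.equivFun.restrictScalars R
    have h1 : IsSyzygy R 2 (ModuleCat.of R (Fin d → ResidueField R))
        (ModuleCat.of R (Fin d → N)) := isSyzygy_pi d hN
    have h2 : IsSyzygy R 2 (ModuleCat.of R S) (ModuleCat.of R (Fin d → N)) :=
      isSyzygy_congr e0.symm (LinearEquiv.refl R _) h1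
    have h3 : IsSyzygy R 2 (ModuleCat.of R (LinearMap.ker π₁))
        (ModuleCat.of R (Fin d → N)) :=
      isSyzygy_congr (LinearEquiv.ofEq _ _ hker1.symm) (LinearEquiv.refl R _) h2
    have hT := buildSyz _ h3
    exact summand_of_pi (h _ finM nonfreeM _ hT)
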